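/- Let (X,‖·‖) be an asymptotically transitive normed space and |||·||| any norm on X such that for every ε > 0 there is δ > 0 with: every linear automorphism T of (X,‖·‖) satisfying max(‖T‖,‖T⁻¹‖) ≤ 1+δ also satisfies max(|||T|||,|||T⁻¹|||) ≤ 1+ε. Then |||·||| = c‖·‖ for some constant c > 0. -/
import Mathlib


theorem stmt_18 {X : Type*} [NormedAddCommGroup X] [NormedSpace ℝ X]
    (n : X → ℝ)
    (hn_add : ∀ x y : X, n (x + y) ≤ n x + n y)
    (hn_smul : ∀ (a : ℝ) (x : X), n (a • x) = |a| * n x)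
    (hn_zero : ∀ x : X, n x = 0 ↔ x = 0)
    (hAT : ∀ x y : X, ‖x‖ = 1 → ‖y‖ = 1 → ∀ δ > 0, ∃ T : X ≃L[ℝ] X,
      T x = y ∧ ‖(T : X →L[ℝ] X)‖ ≤ 1 + δ ∧ ‖(T.symm : X →L[ℝ] X)‖ ≤ 1 + δ)
    (hcomp : ∀ ε > 0, ∃ δ > 0, ∀ T : X ≃L[ℝ] X,
      ‖(T : X →L[ℝ] X)‖ ≤ 1 + δ → ‖(T.symm : X →L[ℝ] X)‖ ≤ 1 + δ →
        (∀ x : X, n (T x) ≤ (1 + ε) * n x) ∧ (∀ x : X, n (T.symm x) ≤ (1 + ε) * n x)) :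
    ∃ c > 0, ∀ x : X, n x = c * ‖x‖ := by
  -- nonnegativity of n
  have hn0 : n 0 = 0 := (hn_zero 0).mpr rfl
  have hnneg : ∀ x : X, 0 ≤ n x := by
    intro x
    have h := hn_add x (-x)
    have hneg : n (-x) = n x := by
      have := hn_smul (-1) x
      simpa using this
    have h0 : (0:ℝ) ≤ n x + n (-x) := by simpa [hn0] using h
    rw [hneg] at h0
    linarith
  by_cases htriv : ∀ x : X, x = 0
  · refine ⟨1, one_pos, fun x => ?_⟩
    rw [htriv x]
    simp [hn0]
  · push_neg at htriv
    obtain ⟨x₀, hx₀⟩ := htriv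
    set u : X := ‖x₀‖⁻¹ • x₀ with hu_def
    have hu : ‖u‖ = 1 := norm_smul_inv_norm hx₀
    have hune : u ≠ 0 := by
      intro h
      rw [h] at hu
      simp at hu
    set c : ℝ := n u with hc_def
    have hc : 0 < c := by
      rcases lt_or_eq_of_le (hnneg u) with h | h
      · exact h
      · exact absurd ((hn_zero u).mp h.symm) hune
    -- key: for every ε > 0, n y is pinched
    have key : ∀ y : X, ‖y‖ = 1 → ∀ ε : ℝ, 0 < ε →
        n y ≤ (1 + ε) * c ∧ c ≤ (1 + ε) * n y := by
      intro y hy ε hε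
      obtain ⟨δ, hδ, hδprop⟩ := hcomp ε hε
      obtain ⟨T, hTu, hT, hTsymm⟩ := hAT u y hu hy δ hδ
      obtain ⟨h1, h2⟩ := hδprop T hT hTsymm
      constructor
      · have := h1 u
        rwa [hTu] at this
      · have := h2 y
        have hsy : T.symm y = u := by
          rw [← hTu]; exact T.symm_apply_apply u
        rwa [hsy] at this
    have keq : ∀ y : X, ‖y‖ = 1 → n y = c := by
      intro y hy
      have hle : n y ≤ c := by
        refine le_of_forall_pos_le_add fun ε hε => ?_
        have h := (key y hy (ε / c) (div_pos hε hc)).1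
        calc n y ≤ (1 + ε / c) * c := h
          _ = c + ε := by field_simp
      have hub : n y ≤ 2 * c := by linarith
      have hge : c ≤ n y := by
        refine le_of_forall_pos_le_add fun ε hε => ?_
        have h := (key y hy (ε / (2 * c)) (div_pos hε (by linarith))).2
        have : c ≤ n y + (ε / (2 * c)) * n y := by nlinarith [h]
        have h2 : (ε / (2 * c)) * n y ≤ ε := by
          rw [div_mul_eq_mul_div, div_le_iff₀ (by linarith)]
          nlinarith [hnneg y]
        linarith
      linarith
    refine ⟨c, hc, fun x => ?_⟩
    by_cases hx : x = 0
    · simp [hx, hn0]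
    · have hnx : ‖x‖ ≠ 0 := norm_ne_zero_iff.mpr hx
      have hx1 : ‖(‖x‖⁻¹ • x)‖ = 1 := norm_smul_inv_norm hx
      have := keq (‖x‖⁻¹ • x) hx1
      rw [hn_smul] at this
      rw [abs_of_nonneg (inv_nonneg.mpr (norm_nonneg x))] at this
      field_simp at this
      linarith [this]
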